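/- Let k ∈ ℕ, let a < b be real numbers, and let u, φ : [a, b] → ℝ be continuous. Then there exists a unique pair (p, q) of real polynomials of degree at most k such that: (i) ∫ₐᵇ (p - u) r dx = 0 and ∫ₐᵇ (q - φ) r dx = 0 for every polynomial r of degree at most k - 1; (ii) p(a) + q(a) = u(a) + φ(a); and (iii) p(b) - q(b) = u(b) - φ(b). Moreover p = (1/2)(P_a(u+φ) + P_b(u-φ)) and q = (1/2)(P_a(u+φ) - P_b(u-φ)), where for a continuous function v, P_a v (respectively P_b v) denotes the unique polynomial of degree at most k that is orthogonal to all polynomials of degree at most k - 1 in the L²(a,b) inner product against v and matches v at the endpoint a (respectively b). -/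

import Mathlib

open Polynomial intervalIntegral

/-- `P` is the degree-`≤ k` Gauss-Radau projection of `v` on `[a,b]` matching `v` at the
point `c`: it is `L²(a,b)`-orthogonal to all polynomials of degree at most `k-1` against `v`
and `P(c) = v(c)`. -/
def IsGaussRadauProj (k : ℕ) (a b c : ℝ) (v : ℝ → ℝ) (P : Polynomial ℝ) : Prop :=
  P.degree ≤ (k : WithBot ℕ) ∧ P.eval c = v c ∧
    ∀ r : Polynomial ℝ, r.degree < (k : WithBot ℕ) →
      ∫ x in a..b, (P.eval x - v x) * r.eval x = 0

/-- `(p, q)` is the coupled auxiliary projection of `(u, φ)` on `[a,b]` with polynomial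
degree `k`: both have degree at most `k`, both are `L²(a,b)`-orthogonal to polynomials of
degree at most `k-1` against `u` resp. `φ`, and the coupled endpoint conditions
`p(a) + q(a) = u(a) + φ(a)` and `p(b) - q(b) = u(b) - φ(b)` hold. -/
def IsCoupledProj (k : ℕ) (a b : ℝ) (u φ : ℝ → ℝ) (p q : Polynomial ℝ) : Prop :=
  p.degree ≤ (k : WithBot ℕ) ∧ q.degree ≤ (k : WithBot ℕ) ∧
    (∀ r : Polynomial ℝ, r.degree < (k : WithBot ℕ) →
      ∫ x in a..b, (p.eval x - u x) * r.eval x = 0) ∧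
    (∀ r : Polynomial ℝ, r.degree < (k : WithBot ℕ) →
      ∫ x in a..b, (q.eval x - φ x) * r.eval x = 0) ∧
    p.eval a + q.eval a = u a + φ a ∧
    p.eval b - q.eval b = u b - φ b

section Aux
open MeasureTheory Set

lemma ii {a b : ℝ} (hab : a ≤ b) {f : ℝ → ℝ} (hf : ContinuousOn f (Set.Icc a b)) :
    IntervalIntegrable f volume a b :=
  ContinuousOn.intervalIntegrable_of_Icc hab hf

lemma poly_contOn {a b : ℝ} (p : Polynomial ℝ) : ContinuousOn (fun x => p.eval x) (Set.Icc a b) :=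
  p.continuous.continuousOn

lemma integral_mul_poly_eq_zero {a b : ℝ} (hab : a ≤ b) {f : ℝ → ℝ}
    (hf : ContinuousOn f (Set.Icc a b)) {k : ℕ}
    (h : ∀ i : ℕ, i < k → ∫ x in a..b, f x * x ^ i = 0)
    {r : Polynomial ℝ} (hr : r.degree < (k : WithBot ℕ)) :
    ∫ x in a..b, f x * r.eval x = 0 := by
  have hrm : r ∈ degreeLT ℝ k := mem_degreeLT.2 hr
  set c : Fin k → ℝ := degreeLTEquiv ℝ k ⟨r, hrm⟩ with hc
  have hI : ∀ i : ℕ, IntervalIntegrable (fun x => f x * x ^ i) volume a b :=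
    fun i => ii hab (hf.mul ((continuous_pow i).continuousOn))
  have h1 : ∫ x in a..b, f x * r.eval x
      = ∫ x in a..b, ∑ i : Fin k, c i * (f x * x ^ (i : ℕ)) := by
    apply intervalIntegral.integral_congr
    intro x hx
    show f x * r.eval x = _
    rw [eval_eq_sum_degreeLTEquiv hrm x, Finset.mul_sum]
    exact Finset.sum_congr rfl fun i _ => by ring
  rw [h1, intervalIntegral.integral_finset_sum (μ := volume) (s := Finset.univ)
    (f := fun (i : Fin k) (x : ℝ) => c i * (f x * x ^ (i : ℕ)))
    (fun i _ => (hI (i : ℕ)).const_mul (c i))]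
  refine Finset.sum_eq_zero fun i _ => ?_
  rw [intervalIntegral.integral_const_mul, h i i.2, mul_zero]

lemma poly_ne_zero_integral {a b : ℝ} (hab : a < b) {g : Polynomial ℝ} (hg : g ≠ 0)
    (hnn : ∀ x ∈ Set.Ioc a b, 0 ≤ g.eval x) (hz : (∫ x in a..b, g.eval x) = 0) : False := by
  have hInt : IntervalIntegrable (fun x => g.eval x) volume a b := g.continuous.intervalIntegrable _ _
  have hae : (fun x => g.eval x) =ᵐ[volume.restrict (Set.Ioc a b)] 0 := by
    rw [← intervalIntegral.integral_eq_zero_iff_of_le_of_nonneg_ae hab.le ?_ hInt]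
    · exact hz
    · filter_upwards [MeasureTheory.ae_restrict_mem measurableSet_Ioc] with x hx
      exact hnn x hx
  set R : Set ℝ := {x | g.IsRoot x} with hR
  have hRfin : R.Finite := Polynomial.finite_setOf_isRoot hg
  have hmem : ∀ᵐ x ∂(volume.restrict (Set.Ioc a b)), x ∈ R := by
    filter_upwards [hae] with x hx using hx
  have hcompl : (volume.restrict (Set.Ioc a b)) Rᶜ = 0 := hmem
  have hRz : (volume.restrict (Set.Ioc a b)) R ≤ volume R := by
    rw [Measure.restrict_apply hRfin.measurableSet]
    exact measure_mono Set.inter_subset_left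
  have hRz0 : volume R = 0 := hRfin.measure_zero _
  have huniv : (volume.restrict (Set.Ioc a b)) Set.univ = 0 := by
    have := measure_union_le (μ := volume.restrict (Set.Ioc a b)) R Rᶜ
    rw [Set.union_compl_self] at this
    have : (volume.restrict (Set.Ioc a b)) Set.univ ≤ 0 := by
      calc _ ≤ _ := this
        _ ≤ 0 + 0 := add_le_add (hRz.trans hRz0.le) hcompl.le
        _ = 0 := by simp
    exact le_antisymm this zero_le
  rw [Measure.restrict_apply_univ, Real.volume_Ioc] at huniv
  simp only [ENNReal.ofReal_eq_zero, sub_nonpos] at huniv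
  exact absurd huniv (not_le.2 hab)

lemma gr_zero {a b : ℝ} (hab : a < b) {k : ℕ} {c : ℝ} (hc : c = a ∨ c = b) {P : Polynomial ℝ}
    (hdeg : P.degree ≤ (k : WithBot ℕ)) (h0 : P.eval c = 0)
    (hint : ∀ r : Polynomial ℝ, r.degree < (k : WithBot ℕ) →
      ∫ x in a..b, P.eval x * r.eval x = 0) : P = 0 := by
  by_contra hP
  obtain ⟨Q, hQ⟩ := (dvd_iff_isRoot (p := P) (a := c)).2 h0
  have hXc : (X - C c : Polynomial ℝ) ≠ 0 := X_sub_C_ne_zero c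
  have hQne : Q ≠ 0 := by rintro rfl; exact hP (by simp [hQ])
  have hnd : P.natDegree = 1 + Q.natDegree := by
    rw [hQ, natDegree_mul hXc hQne, natDegree_X_sub_C]
  have hQdeg : Q.degree < (k : WithBot ℕ) := by
    have h1 : P.natDegree ≤ k := natDegree_le_iff_degree_le.2 hdeg
    have h2 : Q.natDegree < k := by omega
    exact (natDegree_lt_iff_degree_lt hQne).1 h2
  have hPQ : ∫ x in a..b, P.eval x * Q.eval x = 0 := hint Q hQdeg
  rcases hc with rfl | rfl
  · refine poly_ne_zero_integral hab (g := (X - C c) * Q ^ 2) ?_ ?_ ?_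
    · exact mul_ne_zero hXc (pow_ne_zero 2 hQne)
    · intro x hx
      simp only [eval_mul, eval_sub, eval_X, eval_C, eval_pow]
      exact mul_nonneg (by linarith [hx.1]) (sq_nonneg _)
    · rw [← hPQ]
      apply intervalIntegral.integral_congr
      intro x hx
      simp [hQ]; ring
  · refine poly_ne_zero_integral hab (g := (C c - X) * Q ^ 2) ?_ ?_ ?_
    · refine mul_ne_zero ?_ (pow_ne_zero 2 hQne)
      intro h
      have := congrArg (fun p => Polynomial.eval (c + 1) p) h
      simp at this
    · intro x hx
      simp only [eval_mul, eval_sub, eval_X, eval_C, eval_pow]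
      exact mul_nonneg (by linarith [hx.2]) (sq_nonneg _)
    · rw [← neg_eq_zero, ← intervalIntegral.integral_neg, ← hPQ]
      apply intervalIntegral.integral_congr
      intro x hx
      simp [hQ]; ring

noncomputable def Tmap (k : ℕ) (a b c : ℝ) : degreeLT ℝ (k + 1) →ₗ[ℝ] (Fin k → ℝ) × ℝ where
  toFun P := (fun i => ∫ x in a..b, (P : Polynomial ℝ).eval x * x ^ (i : ℕ),
    (P : Polynomial ℝ).eval c)
  map_add' P Q := by
    ext i
    · show (∫ x in a..b, ((P : Polynomial ℝ) + (Q : Polynomial ℝ)).eval x * x ^ (i:ℕ)) = _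
      have h1 : IntervalIntegrable (fun x => (P : Polynomial ℝ).eval x * x ^ (i:ℕ)) volume a b :=
        ((P : Polynomial ℝ).continuous.mul (continuous_pow _)).intervalIntegrable _ _
      have h2 : IntervalIntegrable (fun x => (Q : Polynomial ℝ).eval x * x ^ (i:ℕ)) volume a b :=
        ((Q : Polynomial ℝ).continuous.mul (continuous_pow _)).intervalIntegrable _ _
      rw [show (fun x => ((P : Polynomial ℝ) + (Q : Polynomial ℝ)).eval x * x ^ (i:ℕ))
          = fun x => (P : Polynomial ℝ).eval x * x ^ (i:ℕ)
            + (Q : Polynomial ℝ).eval x * x ^ (i:ℕ) from funext fun x => by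
            simp [eval_add]; ring]
      exact intervalIntegral.integral_add h1 h2
    · show ((P : Polynomial ℝ) + (Q : Polynomial ℝ)).eval c = _
      simp [eval_add]
  map_smul' r P := by
    ext i
    · show (∫ x in a..b, (r • (P : Polynomial ℝ)).eval x * x ^ (i:ℕ)) = _
      rw [show (fun x => (r • (P : Polynomial ℝ)).eval x * x ^ (i:ℕ))
          = fun x => r * ((P : Polynomial ℝ).eval x * x ^ (i:ℕ)) from funext fun x => by
            simp [Polynomial.eval_smul, smul_eq_mul]; ring]
      rw [intervalIntegral.integral_const_mul]
      rfl
    · show (r • (P : Polynomial ℝ)).eval c = _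
      simp [Polynomial.eval_smul, smul_eq_mul]

lemma Tmap_injective {k : ℕ} {a b c : ℝ} (hab : a < b) (hc : c = a ∨ c = b) :
    Function.Injective (Tmap k a b c) := by
  rw [← LinearMap.ker_eq_bot, Submodule.eq_bot_iff]
  rintro ⟨P, hP⟩ hker
  have hker' : Tmap k a b c ⟨P, hP⟩ = 0 := hker
  have h1 : ∀ i : Fin k, ∫ x in a..b, P.eval x * x ^ (i : ℕ) = 0 := by
    intro i
    exact congrFun (congrArg Prod.fst (hker' : _ = (0 : (Fin k → ℝ) × ℝ))) i
  have h2 : P.eval c = 0 := congrArg Prod.snd hker'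
  have hdeg : P.degree ≤ (k : WithBot ℕ) := by
    by_cases hz : P = 0
    · simp [hz]
    · have := (natDegree_lt_iff_degree_lt hz).2 (mem_degreeLT.1 hP)
      exact natDegree_le_iff_degree_le.1 (by omega)
  have hmono : ∀ i : ℕ, i < k → ∫ x in a..b, P.eval x * x ^ i = 0 := fun i hi =>
    h1 ⟨i, hi⟩
  have hgen : ∀ r : Polynomial ℝ, r.degree < (k : WithBot ℕ) →
      ∫ x in a..b, P.eval x * r.eval x = 0 := fun r hr =>
    integral_mul_poly_eq_zero hab.le (poly_contOn P) hmono hr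
  have := gr_zero hab hc hdeg h2 hgen
  simp [this]

lemma gr_exists {k : ℕ} {a b c : ℝ} (hab : a < b) (hc : c = a ∨ c = b) {v : ℝ → ℝ}
    (hv : ContinuousOn v (Set.Icc a b)) : ∃ P, IsGaussRadauProj k a b c v P := by
  haveI : FiniteDimensional ℝ (degreeLT ℝ (k + 1)) :=
    LinearEquiv.finiteDimensional (degreeLTEquiv ℝ (k + 1)).symm
  have hdim : Module.finrank ℝ (degreeLT ℝ (k + 1)) = Module.finrank ℝ ((Fin k → ℝ) × ℝ) := by
    rw [(degreeLTEquiv ℝ (k + 1)).finrank_eq]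
    simp [Module.finrank_prod]
  have hsurj : Function.Surjective (Tmap k a b c) :=
    (LinearMap.injective_iff_surjective_of_finrank_eq_finrank hdim).1
      (Tmap_injective hab hc)
  obtain ⟨⟨P, hPm⟩, hTP⟩ := hsurj (fun i => ∫ x in a..b, v x * x ^ (i : ℕ), v c)
  have hImono : ∀ i : ℕ, IntervalIntegrable (fun x => v x * x ^ i) volume a b :=
    fun i => ii hab.le (hv.mul ((continuous_pow i).continuousOn))
  have hPi : ∀ i : ℕ, IntervalIntegrable (fun x => P.eval x * x ^ i) volume a b :=
    fun i => (P.continuous.mul (continuous_pow _)).intervalIntegrable _ _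
  refine ⟨P, ?_, ?_, ?_⟩
  · by_cases hz : P = 0
    · simp [hz]
    · have := (natDegree_lt_iff_degree_lt hz).2 (mem_degreeLT.1 hPm)
      exact natDegree_le_iff_degree_le.1 (by omega)
  · exact congrArg Prod.snd hTP
  · intro r hr
    have hmono : ∀ i : ℕ, i < k → ∫ x in a..b, (P.eval x - v x) * x ^ i = 0 := by
      intro i hi
      have h1 : (∫ x in a..b, P.eval x * x ^ i) = ∫ x in a..b, v x * x ^ i :=
        congrFun (congrArg Prod.fst hTP) ⟨i, hi⟩
      rw [show (fun x => (P.eval x - v x) * x ^ i)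
          = fun x => P.eval x * x ^ i - v x * x ^ i from funext fun x => by ring]
      rw [intervalIntegral.integral_sub (hPi i) (hImono i), h1, sub_self]
    exact integral_mul_poly_eq_zero hab.le ((poly_contOn P).sub hv) hmono hr

lemma gr_unique {k : ℕ} {a b c : ℝ} (hab : a < b) (hc : c = a ∨ c = b) {v : ℝ → ℝ}
    (hv : ContinuousOn v (Set.Icc a b)) {P1 P2 : Polynomial ℝ}
    (h1 : IsGaussRadauProj k a b c v P1) (h2 : IsGaussRadauProj k a b c v P2) : P1 = P2 := by
  obtain ⟨hd1, he1, hi1⟩ := h1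
  obtain ⟨hd2, he2, hi2⟩ := h2
  have hdeg : (P1 - P2).degree ≤ (k : WithBot ℕ) :=
    le_trans (degree_sub_le _ _) (max_le hd1 hd2)
  have h0 : (P1 - P2).eval c = 0 := by simp [he1, he2]
  have hint : ∀ r : Polynomial ℝ, r.degree < (k : WithBot ℕ) →
      ∫ x in a..b, (P1 - P2).eval x * r.eval x = 0 := by
    intro r hr
    have hI1 : IntervalIntegrable (fun x => (P1.eval x - v x) * r.eval x) volume a b :=
      ii hab.le (((poly_contOn P1).sub hv).mul (poly_contOn r))
    have hI2 : IntervalIntegrable (fun x => (P2.eval x - v x) * r.eval x) volume a b :=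
      ii hab.le (((poly_contOn P2).sub hv).mul (poly_contOn r))
    rw [show (fun x => (P1 - P2).eval x * r.eval x)
        = fun x => (P1.eval x - v x) * r.eval x - (P2.eval x - v x) * r.eval x from
        funext fun x => by simp; ring]
    rw [intervalIntegral.integral_sub hI1 hI2, hi1 r hr, hi2 r hr, sub_self]
  have := gr_zero hab hc hdeg h0 hint
  exact sub_eq_zero.1 this

end Aux

open MeasureTheory Set in
/-- Lemma 2.6 of the paper (cell-local form): the coupled auxiliary projection exists and is
unique, and it decouples into Gauss-Radau projections of `u + φ` (matching at `a`) and
`u - φ` (matching at `b`): `p = (1/2)(P_a(u+φ) + P_b(u-φ))`, `q = (1/2)(P_a(u+φ) - P_b(u-φ))`. -/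
theorem coupled_projection_exists_unique_and_decouples (k : ℕ) (a b : ℝ) (hab : a < b)
    (u φ : ℝ → ℝ) (hu : ContinuousOn u (Set.Icc a b)) (hφ : ContinuousOn φ (Set.Icc a b)) :
    (∃! pq : Polynomial ℝ × Polynomial ℝ, IsCoupledProj k a b u φ pq.1 pq.2) ∧
    ∀ p q Pa Pb : Polynomial ℝ, IsCoupledProj k a b u φ p q →
      IsGaussRadauProj k a b a (fun x => u x + φ x) Pa →
      IsGaussRadauProj k a b b (fun x => u x - φ x) Pb →
      p = (1 / 2 : ℝ) • (Pa + Pb) ∧ q = (1 / 2 : ℝ) • (Pa - Pb) := by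
  have hs : ContinuousOn (fun x => u x + φ x) (Set.Icc a b) := hu.add hφ
  have hdcont : ContinuousOn (fun x => u x - φ x) (Set.Icc a b) := hu.sub hφ
  -- decoupling claim
  have decouple : ∀ p q Pa Pb : Polynomial ℝ, IsCoupledProj k a b u φ p q →
      IsGaussRadauProj k a b a (fun x => u x + φ x) Pa →
      IsGaussRadauProj k a b b (fun x => u x - φ x) Pb →
      p = (1 / 2 : ℝ) • (Pa + Pb) ∧ q = (1 / 2 : ℝ) • (Pa - Pb) := by
    intro p q Pa Pb hpq hPa hPb
    obtain ⟨hdp, hdq, hip, hiq, hea, heb⟩ := hpq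
    have hsum : IsGaussRadauProj k a b a (fun x => u x + φ x) (p + q) := by
      refine ⟨le_trans (degree_add_le _ _) (max_le hdp hdq), by simp [hea], ?_⟩
      intro r hr
      have hI1 : IntervalIntegrable (fun x => (p.eval x - u x) * r.eval x) volume a b :=
        ii hab.le (((poly_contOn p).sub hu).mul (poly_contOn r))
      have hI2 : IntervalIntegrable (fun x => (q.eval x - φ x) * r.eval x) volume a b :=
        ii hab.le (((poly_contOn q).sub hφ).mul (poly_contOn r))
      rw [show (fun x => ((p + q).eval x - (u x + φ x)) * r.eval x)
          = fun x => (p.eval x - u x) * r.eval x + (q.eval x - φ x) * r.eval x from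
          funext fun x => by simp; ring]
      rw [intervalIntegral.integral_add hI1 hI2, hip r hr, hiq r hr, add_zero]
    have hdiff : IsGaussRadauProj k a b b (fun x => u x - φ x) (p - q) := by
      refine ⟨le_trans (degree_sub_le _ _) (max_le hdp hdq), by simp [heb], ?_⟩
      intro r hr
      have hI1 : IntervalIntegrable (fun x => (p.eval x - u x) * r.eval x) volume a b :=
        ii hab.le (((poly_contOn p).sub hu).mul (poly_contOn r))
      have hI2 : IntervalIntegrable (fun x => (q.eval x - φ x) * r.eval x) volume a b :=
        ii hab.le (((poly_contOn q).sub hφ).mul (poly_contOn r))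
      rw [show (fun x => ((p - q).eval x - (u x - φ x)) * r.eval x)
          = fun x => (p.eval x - u x) * r.eval x - (q.eval x - φ x) * r.eval x from
          funext fun x => by simp; ring]
      rw [intervalIntegral.integral_sub hI1 hI2, hip r hr, hiq r hr, sub_zero]
    have h1 : p + q = Pa := gr_unique hab (Or.inl rfl) hs hsum hPa
    have h2 : p - q = Pb := gr_unique hab (Or.inr rfl) hdcont hdiff hPb
    constructor
    · rw [← h1, ← h2]
      have : (p + q) + (p - q) = (2 : ℝ) • p := by
        rw [two_smul]; ring
      rw [this, smul_smul]; norm_num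
    · rw [← h1, ← h2]
      have : (p + q) - (p - q) = (2 : ℝ) • q := by
        rw [two_smul]; ring
      rw [this, smul_smul]; norm_num
  obtain ⟨Pa, hPa⟩ := gr_exists (k := k) hab (Or.inl rfl) hs
  obtain ⟨Pb, hPb⟩ := gr_exists (k := k) hab (Or.inr rfl) hdcont
  set p0 : Polynomial ℝ := (1 / 2 : ℝ) • (Pa + Pb) with hp0
  set q0 : Polynomial ℝ := (1 / 2 : ℝ) • (Pa - Pb) with hq0
  obtain ⟨hdA, heA, hiA⟩ := hPa
  obtain ⟨hdB, heB, hiB⟩ := hPb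
  have hcp : IsCoupledProj k a b u φ p0 q0 := by
    refine ⟨?_, ?_, ?_, ?_, ?_, ?_⟩
    · exact le_trans (degree_smul_le _ _) (le_trans (degree_add_le _ _) (max_le hdA hdB))
    · exact le_trans (degree_smul_le _ _) (le_trans (degree_sub_le _ _) (max_le hdA hdB))
    · intro r hr
      have hI1 : IntervalIntegrable (fun x => (Pa.eval x - (u x + φ x)) * r.eval x) volume a b :=
        ii hab.le (((poly_contOn Pa).sub hs).mul (poly_contOn r))
      have hI2 : IntervalIntegrable (fun x => (Pb.eval x - (u x - φ x)) * r.eval x) volume a b :=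
        ii hab.le (((poly_contOn Pb).sub hdcont).mul (poly_contOn r))
      rw [show (fun x => (p0.eval x - u x) * r.eval x)
          = fun x => (1 / 2 : ℝ) * ((Pa.eval x - (u x + φ x)) * r.eval x
            + (Pb.eval x - (u x - φ x)) * r.eval x) from funext fun x => by
          simp [hp0, Polynomial.eval_smul, smul_eq_mul]; ring]
      rw [intervalIntegral.integral_const_mul, intervalIntegral.integral_add hI1 hI2,
        hiA r hr, hiB r hr]
      norm_num
    · intro r hr
      have hI1 : IntervalIntegrable (fun x => (Pa.eval x - (u x + φ x)) * r.eval x) volume a b :=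
        ii hab.le (((poly_contOn Pa).sub hs).mul (poly_contOn r))
      have hI2 : IntervalIntegrable (fun x => (Pb.eval x - (u x - φ x)) * r.eval x) volume a b :=
        ii hab.le (((poly_contOn Pb).sub hdcont).mul (poly_contOn r))
      rw [show (fun x => (q0.eval x - φ x) * r.eval x)
          = fun x => (1 / 2 : ℝ) * ((Pa.eval x - (u x + φ x)) * r.eval x
            - (Pb.eval x - (u x - φ x)) * r.eval x) from funext fun x => by
          simp [hq0, Polynomial.eval_smul, smul_eq_mul]; ring]
      rw [intervalIntegral.integral_const_mul, intervalIntegral.integral_sub hI1 hI2,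
        hiA r hr, hiB r hr]
      norm_num
    · have hA := heA
      simp only [hp0, hq0, Polynomial.eval_smul, smul_eq_mul, eval_add, eval_sub]
      simp only at hA
      linarith
    · have hB := heB
      simp only [hp0, hq0, Polynomial.eval_smul, smul_eq_mul, eval_add, eval_sub]
      simp only at hB
      linarith
  refine ⟨⟨(p0, q0), hcp, ?_⟩, decouple⟩
  rintro ⟨p, q⟩ hpq
  obtain ⟨hp, hq⟩ := decouple p q Pa Pb hpq ⟨hdA, heA, hiA⟩ ⟨hdB, heB, hiB⟩
  exact Prod.ext hp hq
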